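/- For every δ > 0 and c > 0 there exists a constant C > 0 such that for every s > 0: ∑_{M=0}^∞ exp(−c · (2^{M+1} / ((M+1)² · s))^δ) ≤ 3 + C · ∫_{8/9}^∞ exp(−c · (x/s)^δ) · x^{−1} dx. -/

import Mathlib

open MeasureTheory intervalIntegral

private lemma lint_inv (a b : ℝ) (ha : 0 < a) (hab : a ≤ b) :
    ∫⁻ x in Set.Ioc a b, ENNReal.ofReal x⁻¹ = ENNReal.ofReal (Real.log (b / a)) := by
  have hb : 0 < b := lt_of_lt_of_le ha hab
  have hint : IntegrableOn (fun x : ℝ => x⁻¹) (Set.Ioc a b) := by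
    have := (intervalIntegrable_inv (μ := volume) (f := fun x : ℝ => x)
      (fun x hx => by
        rcases Set.mem_uIcc.mp hx with h | h
        · exact ne_of_gt (lt_of_lt_of_le ha h.1)
        · exact ne_of_gt (lt_of_lt_of_le hb h.1))
      (continuous_id.continuousOn)).1
    simpa [Set.uIoc_of_le hab] using this
  rw [← MeasureTheory.ofReal_integral_eq_lintegral_ofReal hint
      (ae_restrict_of_forall_mem measurableSet_Ioc (fun x hx => by
        have : 0 < x := lt_of_lt_of_le ha hx.1.le
        positivity))]
  congr 1
  rw [← integral_of_le (f := fun x : ℝ => x⁻¹) (μ := volume) hab]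
  exact integral_inv_of_pos ha hb

private lemma meas_f (δ c s : ℝ) :
    Measurable fun x : ℝ => ENNReal.ofReal (Real.exp (-c * (x/s) ^ δ) * x⁻¹) := by
  apply ENNReal.measurable_ofReal.comp
  exact ((Real.measurable_exp.comp (((measurable_id.div_const s).pow_const δ).const_mul
    (-c)))).mul measurable_inv

private lemma per_interval (δ c s a b : ℝ) (hδ : 0 < δ) (hc : 0 < c) (hs : 0 < s)
    (ha : 0 < a) (hab : a ≤ b) :
    ENNReal.ofReal (Real.exp (-c * (b/s) ^ δ)) * ENNReal.ofReal (Real.log (b / a)) ≤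
      ∫⁻ x in Set.Ioc a b, ENNReal.ofReal (Real.exp (-c * (x/s) ^ δ) * x⁻¹) := by
  rw [← lint_inv a b ha hab, ← lintegral_const_mul _ (measurable_inv.ennreal_ofReal)]
  apply setLIntegral_mono (meas_f δ c s)
  intro x hx
  rw [← ENNReal.ofReal_mul (Real.exp_nonneg _)]
  apply ENNReal.ofReal_le_ofReal
  have hx0 : 0 < x := lt_of_lt_of_le ha hx.1.le
  apply mul_le_mul_of_nonneg_right _ (by positivity)
  apply Real.exp_le_exp.mpr
  have hxb : x / s ≤ b / s := by gcongr; exact hx.2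
  have : (x/s) ^ δ ≤ (b/s) ^ δ := Real.rpow_le_rpow (by positivity) hxb hδ.le
  nlinarith [this]

private noncomputable def Xseq (N : ℕ) : ℝ := 2 ^ N / (N : ℝ) ^ 2

private lemma Xpos {N : ℕ} (hN : 1 ≤ N) : 0 < Xseq N := by
  have : (0:ℝ) < (N:ℝ) := by exact_mod_cast hN
  unfold Xseq; positivity

private lemma Xratio {N : ℕ} (hN : 3 ≤ N) : (9/8) * Xseq N ≤ Xseq (N+1) := by
  have hn : (3:ℝ) ≤ (N:ℝ) := by exact_mod_cast hN
  have h2 : (0:ℝ) < 2 ^ N := by positivity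
  have hn0 : (0:ℝ) < (N:ℝ) := by linarith
  unfold Xseq
  push_cast
  rw [show (9:ℝ)/8 * (2^(N:ℕ)/((N:ℝ))^2) = (9*2^(N:ℕ))/(8*((N:ℝ))^2) by ring,
    div_le_div_iff₀ (by positivity) (by positivity)]
  have key : (0:ℝ) ≤ 2^N * (((N:ℝ)-3)*(7*(N:ℝ)+3)) :=
    mul_nonneg h2.le (mul_nonneg (by linarith) (by linarith))
  nlinarith [h2, hn, pow_succ (2:ℝ) N, key]

private lemma Xmono {m n : ℕ} (hm : 3 ≤ m) (hmn : m ≤ n) : Xseq m ≤ Xseq n := by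
  induction n, hmn using Nat.le_induction with
  | base => exact le_rfl
  | succ n hn ih =>
    refine ih.trans ?_
    refine le_trans ?_ (Xratio (hm.trans hn))
    nlinarith [Xpos (show 1 ≤ n by omega)]

private lemma Xge {N : ℕ} (hN : 3 ≤ N) : 8/9 ≤ Xseq N := by
  have : Xseq 3 = 8/9 := by unfold Xseq; norm_num
  calc (8:ℝ)/9 = Xseq 3 := this.symm
    _ ≤ Xseq N := Xmono le_rfl hN

private lemma Xlog {N : ℕ} (hN : 3 ≤ N) :
    Real.log (9/8) ≤ Real.log (Xseq (N+1) / Xseq N) := by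
  apply Real.log_le_log (by norm_num)
  rw [le_div_iff₀ (Xpos (show 1 ≤ N by omega))]
  linarith [Xratio hN]

/-- The sum–integral comparison proved inside Lemma 2.6 of the paper: for every `δ, c > 0`
there is `C > 0` such that for every `s > 0`,
`∑_{M=0}^∞ exp(-c (2^{M+1}/((M+1)² s))^δ) ≤ 3 + C ∫_{8/9}^∞ exp(-c (x/s)^δ) x⁻¹ dx`
(inequality in `[0,∞]`). -/
theorem stmt10 (δ c : ℝ) (hδ : 0 < δ) (hc : 0 < c) :
    ∃ C : ℝ, 0 < C ∧ ∀ s : ℝ, 0 < s →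
      ∑' M : ℕ, ENNReal.ofReal
          (Real.exp (-c * ((2:ℝ) ^ (M + 1) / (((M:ℝ) + 1) ^ 2 * s)) ^ δ)) ≤
        3 + ENNReal.ofReal C *
          ∫⁻ x in Set.Ioi ((8:ℝ)/9), ENNReal.ofReal (Real.exp (-c * (x/s) ^ δ) * x⁻¹) := by
  set L : ℝ := Real.log (9/8) with hLdef
  have hL : 0 < L := Real.log_pos (by norm_num)
  refine ⟨L⁻¹, inv_pos.mpr hL, fun s hs => ?_⟩
  set a : ℕ → ENNReal := fun M => ENNReal.ofReal
    (Real.exp (-c * ((2:ℝ) ^ (M + 1) / (((M:ℝ) + 1) ^ 2 * s)) ^ δ)) with ha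
  set f : ℝ → ENNReal := fun x => ENNReal.ofReal (Real.exp (-c * (x/s) ^ δ) * x⁻¹) with hf
  -- rewrite summand via Xseq
  have harg : ∀ M : ℕ, (2:ℝ) ^ (M + 1) / (((M:ℝ) + 1) ^ 2 * s) = Xseq (M+1) / s := by
    intro M
    have hM1 : ((M:ℝ) + 1) ≠ 0 := by positivity
    unfold Xseq
    push_cast
    field_simp
  have ha' : ∀ M : ℕ, a M = ENNReal.ofReal (Real.exp (-c * (Xseq (M+1) / s) ^ δ)) := by
    intro M; rw [ha]; simp only [harg M]
  -- each term ≤ 1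
  have hone : ∀ M : ℕ, a M ≤ 1 := by
    intro M
    rw [ha']
    refine le_trans (ENNReal.ofReal_le_ofReal (Real.exp_le_one_iff.mpr ?_)) (by simp)
    have h1 : 0 < Xseq (M+1) / s := div_pos (Xpos (Nat.le_add_left 1 M)) hs
    have h2 : 0 ≤ (Xseq (M+1) / s) ^ δ := Real.rpow_nonneg h1.le δ
    nlinarith
  -- split the sum
  have hsplit : ∑' M, a M = (∑ i ∈ Finset.range 3, a i) + ∑' k, a (k + 3) :=
    (Summable.sum_add_tsum_nat_add' (f := a) (k := 3) ENNReal.summable).symm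
  rw [hsplit]
  have hhead : (∑ i ∈ Finset.range 3, a i) ≤ 3 := by
    calc (∑ i ∈ Finset.range 3, a i) ≤ ∑ _i ∈ Finset.range 3, 1 :=
        Finset.sum_le_sum (fun i _ => hone i)
      _ = 3 := by simp
  -- tail terms vs integrals over Ioc (Xseq (k+3)) (Xseq (k+4))
  have htail : ∀ k : ℕ, a (k + 3) ≤
      ENNReal.ofReal L⁻¹ * ∫⁻ x in Set.Ioc (Xseq (k+3)) (Xseq (k+4)), f x := by
    intro k
    have h3 : (3:ℕ) ≤ k + 3 := by omega
    have hpa : 0 < Xseq (k+3) := Xpos (by omega)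
    have hab : Xseq (k+3) ≤ Xseq (k+4) := Xmono h3 (by omega)
    have hper := per_interval δ c s (Xseq (k+3)) (Xseq (k+4)) hδ hc hs hpa hab
    have hlog : ENNReal.ofReal L ≤ ENNReal.ofReal (Real.log (Xseq (k+4) / Xseq (k+3))) :=
      ENNReal.ofReal_le_ofReal (Xlog h3)
    have hE : a (k + 3) * ENNReal.ofReal L ≤
        ∫⁻ x in Set.Ioc (Xseq (k+3)) (Xseq (k+4)), f x := by
      rw [ha']
      calc _ ≤ ENNReal.ofReal (Real.exp (-c * (Xseq (k+4) / s) ^ δ)) *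
            ENNReal.ofReal (Real.log (Xseq (k+4) / Xseq (k+3))) := by
            exact mul_le_mul_right hlog _
        _ ≤ _ := hper
    have hinv : ENNReal.ofReal L⁻¹ * ENNReal.ofReal L = 1 := by
      rw [← ENNReal.ofReal_mul (by positivity), inv_mul_cancel₀ hL.ne', ENNReal.ofReal_one]
    calc a (k+3) = ENNReal.ofReal L⁻¹ * (a (k+3) * ENNReal.ofReal L) := by
          rw [← mul_assoc, mul_comm (ENNReal.ofReal L⁻¹), mul_assoc, hinv, mul_one]
      _ ≤ _ := by gcongr
  -- sum the tail
  have hdisj : Pairwise (Function.onFun Disjoint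
      fun k : ℕ => Set.Ioc (Xseq (k+3)) (Xseq (k+4))) := by
    intro i j hij
    rw [Function.onFun, Set.Ioc_disjoint_Ioc]
    rcases hij.lt_or_gt with h | h
    · exact le_trans (min_le_left _ _) (le_max_right _ _ |>.trans' (Xmono (by omega) (by omega)))
    · exact le_trans (min_le_right _ _) (le_max_left _ _ |>.trans' (Xmono (by omega) (by omega)))
  have hsum_tail : ∑' k, a (k + 3) ≤
      ENNReal.ofReal L⁻¹ * ∫⁻ x in Set.Ioi ((8:ℝ)/9), f x := by
    calc ∑' k, a (k + 3)
        ≤ ∑' k, ENNReal.ofReal L⁻¹ * ∫⁻ x in Set.Ioc (Xseq (k+3)) (Xseq (k+4)), f x :=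
          ENNReal.tsum_le_tsum htail
      _ = ENNReal.ofReal L⁻¹ * ∑' k, ∫⁻ x in Set.Ioc (Xseq (k+3)) (Xseq (k+4)), f x :=
          ENNReal.tsum_mul_left
      _ = ENNReal.ofReal L⁻¹ *
            ∫⁻ x in ⋃ k, Set.Ioc (Xseq (k+3)) (Xseq (k+4)), f x := by
          rw [lintegral_iUnion (fun k => measurableSet_Ioc) hdisj]
      _ ≤ ENNReal.ofReal L⁻¹ * ∫⁻ x in Set.Ioi ((8:ℝ)/9), f x := by
          gcongr
          refine Set.iUnion_subset fun k x hx => ?_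
          exact lt_of_le_of_lt (Xge (show 3 ≤ k+3 by omega)) hx.1
  exact add_le_add hhead hsum_tail
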